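/- Let eta_a be the q-shift operator acting by eta_a f(a) = f(aq), and let Delta_a^k = (eta_a - 1)(eta_a - q)...(eta_a - q^{k-1}). Then for any function f and any nonnegative integer n: sum_{k=0}^n [n choose k]_q b^{n-k} (b;q)_k eta_a^k Delta_a^{n-k} f(a) = sum_{k=0}^n [n choose k]_q (-b)^k q^{binom(k,2)} f(a q^{n-k}). -/

import Mathlib

open Finset

/-- The q-Pochhammer symbol `(a; q)_n = ∏_{j=0}^{n-1} (1 - a q^j)`. -/
noncomputable def qPoch (a q : ℂ) (n : ℕ) : ℂ := ∏ j ∈ Finset.range n, (1 - a * q ^ j)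

/-- The Gaussian binomial coefficient `[n choose k]_q`. -/
noncomputable def qBinom (q : ℂ) (n k : ℕ) : ℂ :=
  qPoch q q n / (qPoch q q k * qPoch q q (n - k))

/-- `Δ_a^k = (η_a - 1)(η_a - q) ⋯ (η_a - q^{k-1})` where `η_a f(a) = f(aq)`. -/
noncomputable def deltaOp (q : ℂ) : ℕ → (ℂ → ℂ) → (ℂ → ℂ)
  | 0, f => f
  | k + 1, f => fun a => deltaOp q k f (a * q) - q ^ k * deltaOp q k f a

lemma qPoch_zero (a q : ℂ) : qPoch a q 0 = 1 := Finset.prod_range_zero _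

lemma qPoch_succ (a q : ℂ) (n : ℕ) : qPoch a q (n+1) = qPoch a q n * (1 - a * q ^ n) :=
  Finset.prod_range_succ _ _

lemma factor_ne (q : ℂ) (hq : ‖q‖ < 1) (j : ℕ) : (1 : ℂ) - q * q ^ j ≠ 0 := by
  intro h
  have h1 : q * q ^ j = 1 := (sub_eq_zero.mp h).symm
  have h2 : ‖q * q ^ j‖ = 1 := by rw [h1]; simp
  rw [norm_mul, norm_pow] at h2
  have h3 : ‖q‖ * ‖q‖ ^ j ≤ ‖q‖ * 1 := by
    have : ‖q‖ ^ j ≤ 1 := pow_le_one₀ (norm_nonneg q) hq.le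
    exact mul_le_mul_of_nonneg_left this (norm_nonneg q)
  rw [mul_one] at h3
  linarith

lemma qPoch_ne (q : ℂ) (hq : ‖q‖ < 1) (N : ℕ) : qPoch q q N ≠ 0 := by
  unfold qPoch
  exact Finset.prod_ne_zero_iff.mpr (fun j _ => factor_ne q hq j)

lemma qBinom_zero (q : ℂ) (hq : ‖q‖ < 1) (n : ℕ) : qBinom q n 0 = 1 := by
  unfold qBinom
  simp only [Nat.sub_zero, qPoch, Finset.range_zero, Finset.prod_empty, one_mul]
  exact div_self (qPoch_ne q hq n)

lemma qBinom_self (q : ℂ) (hq : ‖q‖ < 1) (n : ℕ) : qBinom q n n = 1 := by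
  unfold qBinom
  simp only [Nat.sub_self, qPoch, Finset.range_zero, Finset.prod_empty, mul_one]
  exact div_self (qPoch_ne q hq n)

lemma qBinom_symm (q : ℂ) {m n : ℕ} (h : m ≤ n) : qBinom q n (n - m) = qBinom q n m := by
  unfold qBinom
  rw [show n - (n - m) = m by omega, mul_comm]

lemma pascal (q : ℂ) (hq : ‖q‖ < 1) {k n : ℕ} (h : k + 1 ≤ n) :
    qBinom q (n+1) (k+1) = q^(k+1) * qBinom q n (k+1) + qBinom q n k := by
  obtain ⟨m, rfl⟩ : ∃ m, n = k + 1 + m := ⟨n - (k+1), by omega⟩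
  unfold qBinom
  rw [show k+1+m+1-(k+1) = m+1 by omega, show k+1+m-(k+1) = m by omega,
    show k+1+m-k = m+1 by omega]
  rw [qPoch_succ q q (k+1+m), qPoch_succ q q k, qPoch_succ q q m]
  have h1 := qPoch_ne q hq (k+1+m)
  have h2 := qPoch_ne q hq k
  have h3 := qPoch_ne q hq m
  have h4 := factor_ne q hq (k+1+m)
  have h5 := factor_ne q hq k
  have h6 := factor_ne q hq m
  field_simp
  ring

lemma qBinom_mul (q : ℂ) (hq : ‖q‖ < 1) {k m n : ℕ} (hkm : k ≤ m) (hmn : m ≤ n) :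
    qBinom q n k * qBinom q (n-k) (m-k) = qBinom q n m * qBinom q m k := by
  obtain ⟨i, rfl⟩ : ∃ i, m = k + i := ⟨m - k, by omega⟩
  obtain ⟨j, rfl⟩ : ∃ j, n = k + i + j := ⟨n - (k+i), by omega⟩
  unfold qBinom
  rw [show k+i+j-k = i+j by omega, show k+i-k = i by omega, show i+j-i = j by omega,
    show k+i+j-(k+i) = j by omega]
  have h1 := qPoch_ne q hq (k+i+j)
  have h2 := qPoch_ne q hq k
  have h3 := qPoch_ne q hq i
  have h4 := qPoch_ne q hq j
  have h5 := qPoch_ne q hq (i+j)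
  have h6 := qPoch_ne q hq (k+i)
  field_simp

lemma key_sum (b q : ℂ) (hq : ‖q‖ < 1) (m : ℕ) :
    ∑ k ∈ range (m+1), qBinom q m k * b^(m-k) * qPoch b q k = 1 := by
  induction m with
  | zero => simp [qBinom_self q hq 0, qPoch]
  | succ m ih =>
    rw [Finset.sum_range_succ', Finset.sum_range_succ]
    simp only [Nat.add_sub_add_right, Nat.sub_zero, Nat.sub_self, pow_zero,
      qPoch_zero, qBinom_self q hq, qBinom_zero q hq, one_mul, mul_one]
    have hA : ∑ k ∈ range m, qBinom q (m+1) (k+1) * b^(m-k) * qPoch b q (k+1)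
        = (∑ k ∈ range m, q^(k+1) * qBinom q m (k+1) * b^(m-k) * qPoch b q (k+1))
          + ∑ k ∈ range m, qBinom q m k * b^(m-k) * qPoch b q (k+1) := by
      rw [← Finset.sum_add_distrib]
      refine Finset.sum_congr rfl (fun k hk => ?_)
      rw [pascal q hq (by simpa using Finset.mem_range.mp hk)]
      ring
    have hSa : (∑ k ∈ range m, q^(k+1) * qBinom q m (k+1) * b^(m-k) * qPoch b q (k+1))
          + b^(m+1)
        = ∑ k ∈ range (m+1), b * q^k * (qBinom q m k * b^(m-k) * qPoch b q k) := by
      rw [Finset.sum_range_succ'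
        (fun k => b * q^k * (qBinom q m k * b^(m-k) * qPoch b q k)) m]
      congr 1
      · refine Finset.sum_congr rfl (fun k hk => ?_)
        have hk' : k < m := Finset.mem_range.mp hk
        rw [show m - k = (m - (k+1)) + 1 by omega]
        ring
      · rw [qBinom_zero q hq, qPoch_zero, Nat.sub_zero]
        ring
    have hV : (∑ k ∈ range m, qBinom q m k * b^(m-k) * qPoch b q (k+1))
          + qPoch b q (m+1)
        = (∑ k ∈ range (m+1), qBinom q m k * b^(m-k) * qPoch b q k)
          - ∑ k ∈ range (m+1), b * q^k * (qBinom q m k * b^(m-k) * qPoch b q k) := by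
      rw [← Finset.sum_sub_distrib]
      rw [Finset.sum_range_succ
        (fun k => qBinom q m k * b^(m-k) * qPoch b q k
          - b * q^k * (qBinom q m k * b^(m-k) * qPoch b q k)) m]
      have : ∀ k ∈ range m, qBinom q m k * b^(m-k) * qPoch b q (k+1)
          = qBinom q m k * b^(m-k) * qPoch b q k
            - b * q^k * (qBinom q m k * b^(m-k) * qPoch b q k) := by
        intro k _
        rw [qPoch_succ]; ring
      rw [Finset.sum_congr rfl this]
      rw [qBinom_self q hq, Nat.sub_self, pow_zero, qPoch_succ]
      ring
    linear_combination hA + hSa + hV + ih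

lemma delta_expand (q : ℂ) (hq : ‖q‖ < 1) (f : ℂ → ℂ) :
    ∀ (m : ℕ) (a : ℂ), deltaOp q m f a
      = ∑ i ∈ range (m+1),
          (-1)^(m-i) * q^((m-i).choose 2) * qBinom q m i * f (a * q^i) := by
  intro m
  induction m with
  | zero =>
    intro a
    simp [deltaOp, qBinom_self q hq 0]
  | succ m ih =>
    intro a
    show deltaOp q m f (a * q) - q ^ m * deltaOp q m f a = _
    rw [ih (a * q), ih a]
    simp only [show ∀ i : ℕ, a * q * q ^ i = a * q ^ (i+1) from fun i => by ring]
    have hL : ∑ i ∈ range (m+1+1),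
          (-1:ℂ)^(m+1-i) * q^((m+1-i).choose 2) * qBinom q (m+1) i * f (a * q^i)
        = (∑ i ∈ range m,
            (-1:ℂ)^(m-i) * q^((m-i).choose 2) * qBinom q (m+1) (i+1) * f (a * q^(i+1)))
          + f (a * q^(m+1))
          + (-1:ℂ)^(m+1) * q^((m+1).choose 2) * f (a * q^0) := by
      rw [Finset.sum_range_succ' (fun i =>
        (-1:ℂ)^(m+1-i) * q^((m+1-i).choose 2) * qBinom q (m+1) i * f (a * q^i)) (m+1)]
      rw [Finset.sum_range_succ (fun i =>
        (-1:ℂ)^(m+1-(i+1)) * q^((m+1-(i+1)).choose 2) * qBinom q (m+1) (i+1) * f (a * q^(i+1))) m]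
      simp only [Nat.add_sub_add_right, Nat.sub_self, Nat.sub_zero, pow_zero, one_mul,
        qBinom_self q hq, qBinom_zero q hq, mul_one,
        show Nat.choose 0 2 = 0 from rfl]
    have hS1 : ∑ i ∈ range (m+1),
          (-1:ℂ)^(m-i) * q^((m-i).choose 2) * qBinom q m i * f (a * q^(i+1))
        = (∑ i ∈ range m,
            (-1:ℂ)^(m-i) * q^((m-i).choose 2) * qBinom q m i * f (a * q^(i+1)))
          + f (a * q^(m+1)) := by
      rw [Finset.sum_range_succ]
      simp [qBinom_self q hq, show Nat.choose 0 2 = 0 from rfl]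
    have hS0 : ∑ i ∈ range (m+1),
          (-1:ℂ)^(m-i) * q^((m-i).choose 2) * qBinom q m i * f (a * q^i)
        = (∑ i ∈ range m,
            (-1:ℂ)^(m-(i+1)) * q^((m-(i+1)).choose 2) * qBinom q m (i+1) * f (a * q^(i+1)))
          + (-1:ℂ)^m * q^(m.choose 2) * f (a * q^0) := by
      rw [Finset.sum_range_succ' (fun i =>
        (-1:ℂ)^(m-i) * q^((m-i).choose 2) * qBinom q m i * f (a * q^i)) m]
      rw [qBinom_zero q hq]
      simp only [Nat.sub_zero, mul_one]
    have hM : ∑ i ∈ range m,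
          (-1:ℂ)^(m-i) * q^((m-i).choose 2) * qBinom q (m+1) (i+1) * f (a * q^(i+1))
        = (∑ i ∈ range m,
            (-1:ℂ)^(m-i) * q^((m-i).choose 2) * qBinom q m i * f (a * q^(i+1)))
          - q^m * ∑ i ∈ range m,
            (-1:ℂ)^(m-(i+1)) * q^((m-(i+1)).choose 2) * qBinom q m (i+1) * f (a * q^(i+1)) := by
      rw [Finset.mul_sum, ← Finset.sum_sub_distrib]
      refine Finset.sum_congr rfl (fun i hi => ?_)
      have hi' : i < m := Finset.mem_range.mp hi
      obtain ⟨t, rfl⟩ : ∃ t, m = i + 1 + t := ⟨m - (i+1), by omega⟩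
      rw [pascal q hq (by omega)]
      rw [show i+1+t-i = t+1 by omega, show i+1+t-(i+1) = t by omega]
      rw [show (t+1).choose 2 = t + t.choose 2 from by
        rw [Nat.choose_succ_succ, Nat.choose_one_right]]
      rw [show (-1:ℂ)^(t+1) = -(-1:ℂ)^t from by rw [pow_succ]; ring]
      rw [pow_add, pow_add, pow_add]
      ring
    rw [hS1, hS0, hL, hM]
    have hbot : ((-1:ℂ))^(m+1) * q^((m+1).choose 2)
        = -(q^m * ((-1:ℂ)^m * q^(m.choose 2))) := by
      rw [show (m+1).choose 2 = m + m.choose 2 from by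
        rw [Nat.choose_succ_succ, Nat.choose_one_right], pow_succ, pow_add]
      ring
    linear_combination (-(f (a * q^0))) * hbot


/-- Operator form of Carlitz's identity:
`∑_k [n,k]_q b^{n-k} (b;q)_k η_a^k Δ_a^{n-k} f(a) = ∑_k [n,k]_q (-b)^k q^{C(k,2)} f(a q^{n-k})`. -/
theorem carlitz_operator_identity (n : ℕ) (a b q : ℂ) (hq : ‖q‖ < 1)
    (f : ℂ → ℂ) :
    ∑ k ∈ range (n + 1),
        qBinom q n k * b ^ (n - k) * qPoch b q k * deltaOp q (n - k) f (a * q ^ k)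
      = ∑ k ∈ range (n + 1),
        qBinom q n k * (-b) ^ k * q ^ (k.choose 2) * f (a * q ^ (n - k)) := by
  have hRHS : ∑ k ∈ range (n+1), qBinom q n k * (-b)^k * q^(k.choose 2) * f (a*q^(n-k))
      = ∑ m ∈ range (n+1),
          (-1:ℂ)^(n-m) * q^((n-m).choose 2) * qBinom q n m * b^(n-m) * f (a*q^m) := by
    rw [← Finset.sum_range_reflect
      (fun k => qBinom q n k * (-b)^k * q^(k.choose 2) * f (a*q^(n-k))) (n+1)]
    refine Finset.sum_congr rfl (fun m hm => ?_)
    have hm' : m ≤ n := by have := Finset.mem_range.mp hm; omega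
    rw [show n + 1 - 1 - m = n - m by omega, show n - (n - m) = m by omega,
      qBinom_symm q hm', neg_pow]
    ring
  rw [hRHS]
  calc ∑ k ∈ range (n+1),
        qBinom q n k * b^(n-k) * qPoch b q k * deltaOp q (n-k) f (a*q^k)
      = ∑ k ∈ range (n+1), ∑ m ∈ Ico k (n+1),
          qBinom q n k * b^(n-k) * qPoch b q k *
            ((-1:ℂ)^(n-m) * q^((n-m).choose 2) * qBinom q (n-k) (m-k) * f (a*q^m)) := by
        refine Finset.sum_congr rfl (fun k hk => ?_)
        have hk' : k ≤ n := by have := Finset.mem_range.mp hk; omega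
        rw [Finset.sum_Ico_eq_sum_range, show n + 1 - k = (n-k)+1 by omega]
        rw [delta_expand q hq f (n-k) (a*q^k), Finset.mul_sum]
        refine Finset.sum_congr rfl (fun i hi => ?_)
        have hi' : i ≤ n - k := by have := Finset.mem_range.mp hi; omega
        rw [show n - (k+i) = (n-k)-i by omega, show k+i-k = i by omega,
          show a * q^(k+i) = a * q^k * q^i from by rw [pow_add]; ring]
    _ = ∑ m ∈ range (n+1), ∑ k ∈ range (m+1),
          qBinom q n k * b^(n-k) * qPoch b q k *
            ((-1:ℂ)^(n-m) * q^((n-m).choose 2) * qBinom q (n-k) (m-k) * f (a*q^m)) := by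
        rw [Finset.range_eq_Ico, Finset.sum_Ico_Ico_comm]
        simp only [Finset.range_eq_Ico]
    _ = ∑ m ∈ range (n+1),
          (-1:ℂ)^(n-m) * q^((n-m).choose 2) * qBinom q n m * b^(n-m) * f (a*q^m) := by
        refine Finset.sum_congr rfl (fun m hm => ?_)
        have hm' : m ≤ n := by have := Finset.mem_range.mp hm; omega
        have inner : ∑ k ∈ range (m+1),
            qBinom q n k * b^(n-k) * qPoch b q k *
              ((-1:ℂ)^(n-m) * q^((n-m).choose 2) * qBinom q (n-k) (m-k) * f (a*q^m))
          = ((-1:ℂ)^(n-m) * q^((n-m).choose 2) * qBinom q n m * b^(n-m) * f (a*q^m))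
              * ∑ k ∈ range (m+1), qBinom q m k * b^(m-k) * qPoch b q k := by
          rw [Finset.mul_sum]
          refine Finset.sum_congr rfl (fun k hk => ?_)
          have hk' : k ≤ m := by have := Finset.mem_range.mp hk; omega
          have hb : b^(n-k) = b^(n-m) * b^(m-k) := by
            rw [← pow_add, show (n-m)+(m-k) = n-k by omega]
          rw [hb]
          linear_combination ((-1:ℂ)^(n-m) * q^((n-m).choose 2) * b^(n-m) * b^(m-k)
            * qPoch b q k * f (a*q^m)) * qBinom_mul q hq hk' hm'
        rw [inner, key_sum b q hq m, mul_one]
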